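/- arXiv:0804.3074 — 3 statements merged into one kernel-verified Lean document; each statement's English description precedes it below -/
import Mathlib

section
/- For integers 0 ≤ k ≤ n, the (q,t)-binomial coefficient satisfies the second Pascal-type relation: [n choose k]_{q,t} = t^{q^n - q^k} · [n-1 choose k-1]_{q,t^q} + (k!_{q,t^q} / k!_{q,t}) · [n-1 choose k]_{q,t^q}. -/
noncomputable section

/-- The (q,t)-factorial `k!_{q,t} = ∏_{i=0}^{k-1} (1 - t^{q^k - q^i})`, as a function of
`t` in the field of rational functions `ℚ(t)`. -/
def qtfact (q k : ℕ) (t : RatFunc ℚ) : RatFunc ℚ :=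
  ∏ i ∈ Finset.range k, (1 - t ^ (q ^ k - q ^ i))

/-- The (q,t)-binomial coefficient `[n choose k]_{q,t} = n!_{q,t}/(k!_{q,t} · (n-k)!_{q,t^{q^k}})`,
with the convention that it vanishes outside the range `0 ≤ k ≤ n`. -/
def qtbinom (q n : ℕ) (k : ℤ) (t : RatFunc ℚ) : RatFunc ℚ :=
  if 0 ≤ k ∧ k ≤ (n : ℤ) then
    qtfact q n t / (qtfact q k.toNat t * qtfact q (n - k.toNat) (t ^ q ^ k.toNat))
  else 0

lemma xpow_ne_one {m : ℕ} (hm : m ≠ 0) : (RatFunc.X : RatFunc ℚ) ^ m ≠ 1 := by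
  intro h
  have hX : (RatFunc.X : RatFunc ℚ) = algebraMap (Polynomial ℚ) _ Polynomial.X := rfl
  rw [hX, ← map_pow, ← map_one (algebraMap (Polynomial ℚ) (RatFunc ℚ))] at h
  have h2 := IsFractionRing.injective (Polynomial ℚ) (RatFunc ℚ) h
  have h3 := congrArg Polynomial.natDegree h2
  simp [Polynomial.natDegree_X_pow] at h3
  exact hm h3

lemma one_sub_xpow_ne {m : ℕ} (hm : m ≠ 0) : (1 : RatFunc ℚ) - RatFunc.X ^ m ≠ 0 :=
  sub_ne_zero.mpr (Ne.symm (xpow_ne_one hm))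

lemma qtfact_ne (q k e : ℕ) (hq : 2 ≤ q) (he : e ≠ 0) :
    qtfact q k ((RatFunc.X : RatFunc ℚ) ^ e) ≠ 0 := by
  rw [qtfact]
  apply Finset.prod_ne_zero_iff.mpr
  intro i hi
  rw [← pow_mul]
  refine sub_ne_zero.mpr fun h => ?_
  have hlt : q ^ i < q ^ k := Nat.pow_lt_pow_right (by omega) (Finset.mem_range.mp hi)
  have hm : e * (q ^ k - q ^ i) ≠ 0 := by
    have : q ^ k - q ^ i ≠ 0 := by omega
    positivity
  exact xpow_ne_one hm h.symm

lemma qtfact_X_ne (q k : ℕ) (hq : 2 ≤ q) : qtfact q k (RatFunc.X : RatFunc ℚ) ≠ 0 := by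
  have := qtfact_ne q k 1 hq one_ne_zero
  simpa using this

lemma qtfact_succ (q n : ℕ) (t : RatFunc ℚ) :
    qtfact q (n + 1) t = (1 - t ^ (q ^ (n + 1) - 1)) * qtfact q n (t ^ q) := by
  rw [qtfact, Finset.prod_range_succ', qtfact]
  rw [pow_zero, mul_comm]
  congr 1
  apply Finset.prod_congr rfl
  intro i hi
  rw [← pow_mul, Nat.mul_sub, ← pow_succ', ← pow_succ']

lemma qtfact_zero (q : ℕ) (t : RatFunc ℚ) : qtfact q 0 t = 1 := by simp [qtfact]

/-- Second (q,t)-Pascal relation: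
`[n choose k]_{q,t} = t^{q^n-q^k} · [n-1 choose k-1]_{q,t^q} + (k!_{q,t^q}/k!_{q,t}) · [n-1 choose k]_{q,t^q}`. -/
theorem qt_pascal_second (q n k : ℕ) (hq : 2 ≤ q) (hk : k ≤ n) :
    qtbinom q n (k : ℤ) RatFunc.X =
      RatFunc.X ^ (q ^ n - q ^ k) * qtbinom q (n - 1) ((k : ℤ) - 1) (RatFunc.X ^ q) +
        (qtfact q k (RatFunc.X ^ q) / qtfact q k RatFunc.X) *
          qtbinom q (n - 1) (k : ℤ) (RatFunc.X ^ q) := by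
  rcases Nat.eq_zero_or_pos k with hk0 | hkpos
  · subst hk0
    have h1 : qtbinom q n ((0:ℕ) : ℤ) RatFunc.X = 1 := by
      rw [qtbinom, if_pos ⟨by simp, by simp⟩]
      simp only [Nat.cast_zero, Int.toNat_zero, qtfact_zero, Nat.sub_zero, pow_zero, pow_one,
        one_mul]
      exact div_self (qtfact_X_ne q n hq)
    have h2 : qtbinom q (n - 1) (((0:ℕ) : ℤ) - 1) (RatFunc.X ^ q) = 0 := by
      rw [qtbinom, if_neg]
      simp
    have h3 : qtbinom q (n - 1) ((0:ℕ) : ℤ) (RatFunc.X ^ q) = 1 := by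
      rw [qtbinom, if_pos ⟨by simp, by simp⟩]
      simp only [Nat.cast_zero, Int.toNat_zero, qtfact_zero, Nat.sub_zero, pow_zero, pow_one,
        one_mul]
      exact div_self (qtfact_ne q (n-1) q hq (by omega))
    rw [h1, h2, h3, qtfact_zero, qtfact_zero]
    ring
  · rcases eq_or_lt_of_le hk with rfl | hkn
    · -- k = n case
      have hn1 : 1 ≤ k := hkpos
      have h1 : qtbinom q k (k : ℤ) RatFunc.X = 1 := by
        rw [qtbinom, if_pos ⟨by positivity, le_refl _⟩]
        simp only [Int.toNat_natCast, Nat.sub_self, qtfact_zero, mul_one]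
        exact div_self (qtfact_X_ne q k hq)
      have h2 : qtbinom q (k - 1) ((k : ℤ) - 1) (RatFunc.X ^ q) = 1 := by
        rw [qtbinom, if_pos ⟨by omega, by omega⟩]
        have ht : ((k : ℤ) - 1).toNat = k - 1 := by omega
        rw [ht]
        simp only [Nat.sub_self, qtfact_zero, mul_one]
        exact div_self (qtfact_ne q (k-1) q hq (by omega))
      have h3 : qtbinom q (k - 1) ((k : ℤ)) (RatFunc.X ^ q) = 0 := by
        rw [qtbinom, if_neg]
        push_neg
        intro _
        omega
      rw [h1, h2, h3, Nat.sub_self, pow_zero]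
      ring
    · -- main case: 1 ≤ k < n
      obtain ⟨m, rfl⟩ : ∃ m, n = m + 1 := ⟨n - 1, by omega⟩
      obtain ⟨j, rfl⟩ : ∃ j, k = j + 1 := ⟨k - 1, by omega⟩
      have hjm : j + 1 ≤ m := by omega
      have hq1 : 1 ≤ q ^ (j + 1) := Nat.one_le_pow _ _ (by omega)
      have hq2 : 2 ≤ q ^ (j + 1) := by
        calc 2 ≤ q := hq
        _ = q ^ 1 := (pow_one q).symm
        _ ≤ q ^ (j + 1) := Nat.pow_le_pow_right (by omega) (by omega)
      have hqq : q ^ (j + 1) < q ^ (m + 1) := Nat.pow_lt_pow_right (by omega) (by omega)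
      set X : RatFunc ℚ := RatFunc.X with hX
      -- unfold the three binomials
      rw [qtbinom, if_pos ⟨by positivity, by push_cast; omega⟩]
      rw [qtbinom, if_pos ⟨by push_cast; omega, by push_cast; omega⟩]
      rw [qtbinom, if_pos ⟨by positivity, by push_cast; omega⟩]
      have ht1 : ((j + 1 : ℕ) : ℤ).toNat = j + 1 := by omega
      have ht2 : (((j + 1 : ℕ) : ℤ) - 1).toNat = j := by omega
      rw [ht1, ht2]
      simp only [Nat.add_sub_cancel]
      -- rewrite exponent compositions
      have e1 : (X ^ q) ^ q ^ j = X ^ q ^ (j + 1) := by rw [← pow_mul, ← pow_succ']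
      have e2 : (X ^ q) ^ q ^ (j + 1) = X ^ q ^ (j + 2) := by rw [← pow_mul, ← pow_succ']
      rw [e1, e2]
      have hmj : m + 1 - (j + 1) = (m - j - 1) + 1 := by omega
      have hmj2 : m - (j + 1) = m - j - 1 := by omega
      rw [hmj, hmj2]
      set a := q ^ (m + 1) - q ^ (j + 1) with ha
      set c := q ^ (j + 1) - 1 with hc
      have hb : q ^ (m + 1) - 1 = a + c := by omega
      have ha0 : a ≠ 0 := by omega
      have hc0 : c ≠ 0 := by omega
      have hexp : q ^ (j + 1) * (q ^ ((m - j - 1) + 1) - 1) = a := by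
        rw [Nat.mul_sub, mul_one, ← pow_add, ha]
        have h5 : j + 1 + (m - j - 1 + 1) = m + 1 := by omega
        rw [h5]
      -- factor recurrences
      have hA : qtfact q (m + 1) X = (1 - X ^ (a + c)) * qtfact q m (X ^ q) := by
        rw [qtfact_succ, hb]
      have hB : qtfact q (j + 1) X = (1 - X ^ c) * qtfact q j (X ^ q) := by
        rw [qtfact_succ, hc]
      have hD : qtfact q ((m - j - 1) + 1) (X ^ q ^ (j + 1)) =
          (1 - X ^ a) * qtfact q (m - j - 1) (X ^ q ^ (j + 2)) := by
        rw [qtfact_succ, ← pow_mul, ← pow_mul, hexp, ← pow_succ]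
      have hDm : m - j = (m - j - 1) + 1 := by omega
      rw [hA, hB, hD, hDm, hD]
      simp only [Nat.add_sub_cancel]
      -- abbreviations
      have hAne : qtfact q m (X ^ q) ≠ 0 := qtfact_ne q m q hq (by omega)
      have hJne : qtfact q j (X ^ q) ≠ 0 := qtfact_ne q j q hq (by omega)
      have hKne : qtfact q (j + 1) (X ^ q) ≠ 0 := qtfact_ne q (j + 1) q hq (by omega)
      have hDne : qtfact q (m - j - 1) (X ^ q ^ (j + 2)) ≠ 0 :=
        qtfact_ne q (m - j - 1) (q ^ (j + 2)) hq (by positivity)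
      have hane : (1 : RatFunc ℚ) - X ^ a ≠ 0 := one_sub_xpow_ne ha0
      have hcne : (1 : RatFunc ℚ) - X ^ c ≠ 0 := one_sub_xpow_ne hc0
      field_simp
      ring
end
end

section
/- For integers q ≥ 2 and 0 ≤ k ≤ n, [n choose k]_{q,t} = Σ_λ ∏_{i=1}^{k} (t^{q^k - q^{k-i}})^{δ_i(λ)} · [q^{λ_i}]_{t^{q^k - q^{k-i}}}, where the sum is over partitions λ = (λ_1 ≥ ... ≥ λ_k ≥ 0) with λ_1 ≤ n-k, and δ_i(λ) := Σ_{j=λ_{i+1}}^{λ_i - 1} q^j (with λ_{k+1} := 0), and [N]_s := (1-s^N)/(1-s). -/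
noncomputable section

/-- `[N]_s := (1 - s^N)/(1 - s)`. -/
def qint (N : ℕ) (s : RatFunc ℚ) : RatFunc ℚ := (1 - s ^ N) / (1 - s)

/-- `λ_{i+1}` for a partition encoded by `f : Fin k → ℕ` (with `λ_{k+1} = 0`). -/
def nextPart {k : ℕ} (f : Fin k → ℕ) (i : Fin k) : ℕ :=
  if h : (i : ℕ) + 1 < k then f ⟨(i : ℕ) + 1, h⟩ else 0

/-- `δ_i(λ) := Σ_{j=λ_{i+1}}^{λ_i - 1} q^j`. -/
def deltaStat (q : ℕ) {k : ℕ} (f : Fin k → ℕ) (i : Fin k) : ℕ :=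
  ∑ j ∈ Finset.Ico (nextPart f i) (f i), q ^ j

open Finset

lemma one_sub_X_pow_ne_zero (m : ℕ) (hm : 1 ≤ m) : (1 - (RatFunc.X : RatFunc ℚ)^m) ≠ 0 := by
  have h : (Polynomial.X ^ m - Polynomial.C (1:ℚ)) ≠ 0 := Polynomial.X_pow_sub_C_ne_zero hm 1
  have h2 : algebraMap (Polynomial ℚ) (RatFunc ℚ) (Polynomial.X ^ m - Polynomial.C 1) ≠ 0 := by
    simpa using fun hh => h (IsFractionRing.injective (Polynomial ℚ) (RatFunc ℚ) (by simpa using hh))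
  intro h0
  apply h2
  rw [map_sub, map_pow, RatFunc.algebraMap_X, Polynomial.C_1, map_one]
  linear_combination -h0

lemma epos (q d : ℕ) (hq : 2 ≤ q) (hd : 1 ≤ d) {i m : ℕ} (him : i < m) :
    1 ≤ d * (q ^ m - q ^ i) := by
  have : q ^ i < q ^ m := Nat.pow_lt_pow_right (by omega) him
  exact Nat.mul_pos hd (by omega)

lemma qint_one (s : RatFunc ℚ) (hs : 1 - s ≠ 0) : qint 1 s = 1 := by
  unfold qint; rw [pow_one, div_self hs]

lemma Ico_pow_shift (q a b : ℕ) (ha : 1 ≤ a) :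
    ∑ j ∈ Finset.Ico a b, q^j = q * ∑ j ∈ Finset.Ico (a-1) (b-1), q^j := by
  rw [Finset.sum_Ico_eq_sum_range, Finset.sum_Ico_eq_sum_range, Finset.mul_sum]
  apply Finset.sum_congr (by congr 1; omega)
  intro j _
  rw [← pow_succ']
  congr 1
  omega

lemma range_pow_succ (q n : ℕ) :
    ∑ j ∈ Finset.range (n+1), q^j = 1 + q * ∑ j ∈ Finset.range n, q^j := by
  rw [Finset.sum_range_succ' (fun j => q^j) n, Finset.mul_sum]
  rw [pow_zero, add_comm]
  congr 1
  apply Finset.sum_congr rfl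
  intro j _
  rw [← pow_succ']

lemma qint_succ (q N m : ℕ) (hm : 1 ≤ m) (hq : 1 ≤ q) :
    qint (q^(N+1)) ((RatFunc.X : RatFunc ℚ)^m)
      = qint (q^N) (RatFunc.X^(q*m)) * ((1 - RatFunc.X^(q*m))/(1 - RatFunc.X^m)) := by
  have hne : (1:RatFunc ℚ) - RatFunc.X^(q*m) ≠ 0 :=
    one_sub_X_pow_ne_zero _ (Nat.mul_pos hq hm)
  unfold qint
  rw [← pow_mul, ← pow_mul]
  rw [div_mul_div_comm]
  rw [mul_comm ((1:RatFunc ℚ) - RatFunc.X^(q*m)) ((1:RatFunc ℚ) - RatFunc.X^m)]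
  rw [mul_div_mul_right _ _ hne]
  congr 2
  ring

/-- the summand -/
def smd (q d : ℕ) {k c : ℕ} (f : Fin k → Fin (c+1)) : RatFunc ℚ :=
  ∏ i : Fin k,
    ((RatFunc.X : RatFunc ℚ) ^ (d * (q ^ k - q ^ (k - 1 - (i : ℕ)))))
        ^ (deltaStat q (fun j => (f j : ℕ)) i)
      * qint (q ^ (f i : ℕ)) (RatFunc.X ^ (d * (q ^ k - q ^ (k - 1 - (i : ℕ)))))


lemma sum0 (q d k c : ℕ) (hq : 2 ≤ q) (hd : 1 ≤ d) :
    ∑ f ∈ ((Finset.univ.filter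
        (fun f : Fin (k+1) → Fin (c+2) => ∀ i j : Fin (k+1), i ≤ j → f j ≤ f i)).filter
        (fun f => f (Fin.last k) = 0)), smd q d f
    = ∑ g ∈ Finset.univ.filter
        (fun g : Fin k → Fin (c+2) => ∀ i j : Fin k, i ≤ j → g j ≤ g i), smd q (d*q) g := by
  refine Finset.sum_bij' (fun f _ => fun i : Fin k => f (Fin.castSucc i))
    (fun g _ => fun j : Fin (k+1) => if h : (j:ℕ) < k then g ⟨j, h⟩ else 0)
    ?_ ?_ ?_ ?_ ?_
  · -- hi : maps into target
    intro f hf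
    simp only [Finset.mem_filter, Finset.mem_univ, true_and] at hf ⊢
    intro i j hij
    exact hf.1 _ _ (Fin.castSucc_le_castSucc_iff.mpr hij)
  · -- hj
    intro g hg
    simp only [Finset.mem_filter, Finset.mem_univ, true_and] at hg ⊢
    refine ⟨?_, ?_⟩
    · intro i j hij
      have hij' : (i:ℕ) ≤ (j:ℕ) := hij
      by_cases hjk : (j:ℕ) < k
      · have hik : (i:ℕ) < k := lt_of_le_of_lt hij' hjk
        rw [dif_pos hjk, dif_pos hik]
        exact hg _ _ (Fin.mk_le_mk.mpr hij')
      · rw [dif_neg hjk]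
        exact Fin.zero_le _
    · rw [dif_neg (by simp)]
  · -- left inverse
    intro f hf
    simp only [Finset.mem_filter, Finset.mem_univ, true_and] at hf
    funext j
    by_cases hjk : (j:ℕ) < k
    · simp only [dif_pos hjk]
      exact congrArg f (Fin.ext (by simp))
    · simp only [dif_neg hjk]
      have : j = Fin.last k := by
        apply Fin.ext; simp only [Fin.val_last]; omega
      rw [this, hf.2]
  · -- right inverse
    intro g hg
    funext i
    have hik : ((Fin.castSucc i : Fin (k+1)) : ℕ) < k := by simpa using i.isLt
    simp only [dif_pos hik]
    exact congrArg g (Fin.ext (by simp))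
  · -- summand equality
    intro f hf
    simp only [Finset.mem_filter, Finset.mem_univ, true_and] at hf
    unfold smd
    rw [Fin.prod_univ_castSucc]
    have hlast : ((RatFunc.X : RatFunc ℚ) ^ (d * (q ^ (k+1) - q ^ (k + 1 - 1 - (Fin.last k : ℕ)))))
          ^ (deltaStat q (fun j => (f j : ℕ)) (Fin.last k))
        * qint (q ^ (f (Fin.last k) : ℕ))
            (RatFunc.X ^ (d * (q ^ (k+1) - q ^ (k + 1 - 1 - (Fin.last k : ℕ))))) = 1 := by
      have hf0 : (f (Fin.last k) : ℕ) = 0 := by rw [hf.2]; rfl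
      have hδ : deltaStat q (fun j => (f j : ℕ)) (Fin.last k) = 0 := by
        unfold deltaStat
        simp [hf0]
      rw [hδ, pow_zero, one_mul, hf0, pow_zero]
      apply qint_one
      apply one_sub_X_pow_ne_zero
      apply epos q d hq hd
      simp only [Fin.val_last]
      omega
    rw [hlast, mul_one]
    apply Finset.prod_congr rfl
    intro i _
    have hexp : d * (q ^ (k+1) - q ^ (k + 1 - 1 - (Fin.castSucc i : ℕ)))
        = d * q * (q ^ k - q ^ (k - 1 - (i : ℕ))) := by
      have hik : (i:ℕ) < k := i.isLt
      have h3 : q^(k+1) - q^(k+1-1-(i:ℕ)) = q*(q^k - q^(k-1-(i:ℕ))) := by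
        rw [Nat.mul_sub, ← pow_succ', ← pow_succ']
        congr 2
        omega
      simp only [Fin.coe_castSucc]
      rw [h3, ← mul_assoc]
    have hδ : deltaStat q (fun j => (f j : ℕ)) (Fin.castSucc i)
        = deltaStat q (fun j => (f (Fin.castSucc j) : ℕ)) i := by
      unfold deltaStat nextPart
      have h1 : ((Fin.castSucc i : Fin (k+1)) : ℕ) + 1 < k + 1 := by
        simp only [Fin.coe_castSucc]; omega
      rw [dif_pos h1]
      by_cases h2 : (i:ℕ) + 1 < k
      · rw [dif_pos h2]
        have : (⟨((Fin.castSucc i : Fin (k+1)) : ℕ) + 1, h1⟩ : Fin (k+1))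
            = Fin.castSucc ⟨(i:ℕ)+1, h2⟩ := by
          apply Fin.ext; simp
        rw [this]
      · rw [dif_neg h2]
        have : (⟨((Fin.castSucc i : Fin (k+1)) : ℕ) + 1, h1⟩ : Fin (k+1)) = Fin.last k := by
          apply Fin.ext; simp only [Fin.val_last, Fin.coe_castSucc]; omega
        rw [this]
        simp [hf.2]
    rw [hexp, hδ]

lemma deltaStat_shift (q : ℕ) {k c : ℕ} (f : Fin k → Fin (c+2)) (hpos : ∀ i, 1 ≤ (f i:ℕ))
    (i : Fin k) :
    deltaStat q (fun j => (f j : ℕ)) i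
      = (if (i:ℕ) = k - 1 then 1 else 0) + q * deltaStat q (fun j => (f j : ℕ) - 1) i := by
  unfold deltaStat nextPart
  by_cases hik : (i:ℕ)+1 < k
  · rw [dif_pos hik, dif_pos hik, if_neg (by omega), zero_add]
    exact Ico_pow_shift q _ _ (hpos _)
  · rw [dif_neg hik, dif_neg hik, if_pos (by have := i.isLt; omega)]
    show ∑ j ∈ Finset.Ico 0 ((f i:ℕ)), q^j = 1 + q * ∑ j ∈ Finset.Ico 0 ((f i:ℕ)-1), q^j
    rw [Nat.Ico_zero_eq_range, Nat.Ico_zero_eq_range]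
    have h1 : (f i : ℕ) = ((f i:ℕ)-1)+1 := by have := hpos i; omega
    conv_lhs => rw [h1]
    exact range_pow_succ q _

lemma sum1 (q d k c : ℕ) (hq : 2 ≤ q) (hd : 1 ≤ d) :
    ∑ f ∈ ((Finset.univ.filter
        (fun f : Fin (k+1) → Fin (c+2) => ∀ i j : Fin (k+1), i ≤ j → f j ≤ f i)).filter
        (fun f => ¬ f (Fin.last k) = 0)), smd q d f
    = (RatFunc.X ^ (d*(q^(k+1)-1)) *
        ∏ i : Fin (k+1), (1 - (RatFunc.X : RatFunc ℚ)^(d*q*(q^(k+1)-q^(k+1-1-(i:ℕ)))))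
          / (1 - RatFunc.X^(d*(q^(k+1)-q^(k+1-1-(i:ℕ)))))) *
      ∑ g ∈ Finset.univ.filter
        (fun g : Fin (k+1) → Fin (c+1) => ∀ i j : Fin (k+1), i ≤ j → g j ≤ g i), smd q (d*q) g := by
  rw [Finset.mul_sum]
  refine Finset.sum_bij' (fun f _ => fun i : Fin (k+1) => (⟨(f i:ℕ) - 1, by have := (f i).isLt; omega⟩ : Fin (c+1)))
    (fun g _ => fun i : Fin (k+1) => (⟨(g i:ℕ) + 1, by have := (g i).isLt; omega⟩ : Fin (c+2)))
    ?_ ?_ ?_ ?_ ?_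
  · -- hi
    intro f hf
    simp only [Finset.mem_filter, Finset.mem_univ, true_and] at hf ⊢
    intro i j hij
    have h1 : (f j : ℕ) ≤ (f i : ℕ) := hf.1 i j hij
    exact Fin.mk_le_mk.mpr (by omega)
  · -- hj
    intro g hg
    simp only [Finset.mem_filter, Finset.mem_univ, true_and] at hg ⊢
    constructor
    · intro i j hij
      have h1 : (g j : ℕ) ≤ (g i : ℕ) := hg i j hij
      exact Fin.mk_le_mk.mpr (by omega)
    · intro h
      have := congrArg Fin.val h
      simp only [Fin.val_zero, Fin.val_mk] at this
      omega
  · -- left inv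
    intro f hf
    simp only [Finset.mem_filter, Finset.mem_univ, true_and] at hf
    have hpos : ∀ i, 1 ≤ (f i : ℕ) := by
      intro i
      have h1 : (f (Fin.last k) : ℕ) ≤ (f i : ℕ) := hf.1 i (Fin.last k) (Fin.le_last i)
      have h2 : (f (Fin.last k) : ℕ) ≠ 0 := fun h => hf.2 (Fin.ext h)
      omega
    funext i
    apply Fin.ext
    simp only [Fin.val_mk]
    have := hpos i
    omega
  · -- right inv
    intro g hg
    funext i
    apply Fin.ext
    simp
  · -- summand
    intro f hf
    simp only [Finset.mem_filter, Finset.mem_univ, true_and] at hf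
    have hpos : ∀ i, 1 ≤ (f i : ℕ) := by
      intro i
      have h1 : (f (Fin.last k) : ℕ) ≤ (f i : ℕ) := hf.1 i (Fin.last k) (Fin.le_last i)
      have h2 : (f (Fin.last k) : ℕ) ≠ 0 := fun h => hf.2 (Fin.ext h)
      omega
    unfold smd
    simp only [Fin.val_mk]
    have step : ∀ i : Fin (k+1),
        ((RatFunc.X : RatFunc ℚ) ^ (d * (q ^ (k+1) - q ^ (k + 1 - 1 - (i : ℕ)))))
            ^ (deltaStat q (fun j => (f j : ℕ)) i)
          * qint (q ^ (f i : ℕ)) (RatFunc.X ^ (d * (q ^ (k+1) - q ^ (k + 1 - 1 - (i : ℕ)))))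
        = (((RatFunc.X : RatFunc ℚ) ^ (d * (q ^ (k+1) - q ^ (k + 1 - 1 - (i : ℕ)))))
              ^ (if (i:ℕ) = k + 1 - 1 then 1 else 0)
            * ((1 - (RatFunc.X : RatFunc ℚ)^(d*q*(q^(k+1)-q^(k+1-1-(i:ℕ)))))
              / (1 - RatFunc.X^(d*(q^(k+1)-q^(k+1-1-(i:ℕ)))))))
          * (((RatFunc.X : RatFunc ℚ) ^ (d * q * (q ^ (k+1) - q ^ (k + 1 - 1 - (i : ℕ)))))
              ^ (deltaStat q (fun j => (f j : ℕ) - 1) i)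
            * qint (q ^ ((f i : ℕ) - 1)) (RatFunc.X ^ (d * q * (q ^ (k+1) - q ^ (k + 1 - 1 - (i : ℕ)))))) := by
      intro i
      have hklt : k + 1 - 1 - (i:ℕ) < k + 1 := by have := i.isLt; omega
      have hm : 1 ≤ d * (q^(k+1) - q^(k+1-1-(i:ℕ))) := epos q d hq hd hklt
      have e1 : (f i : ℕ) = ((f i:ℕ) - 1) + 1 := by have := hpos i; omega
      rw [deltaStat_shift q f hpos i]
      conv_lhs => rw [e1]
      rw [qint_succ q _ _ hm (by omega)]
      rw [pow_add]
      have e2 : ((RatFunc.X : RatFunc ℚ) ^ (d * (q ^ (k+1) - q ^ (k + 1 - 1 - (i : ℕ)))))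
          ^ (q * deltaStat q (fun j => (f j : ℕ) - 1) i)
          = ((RatFunc.X : RatFunc ℚ) ^ (d * q * (q ^ (k+1) - q ^ (k + 1 - 1 - (i : ℕ)))))
          ^ (deltaStat q (fun j => (f j : ℕ) - 1) i) := by
        rw [← pow_mul, ← pow_mul]; congr 1; ring
      have e3 : q * (d * (q ^ (k+1) - q ^ (k + 1 - 1 - (i : ℕ))))
          = d * q * (q ^ (k+1) - q ^ (k + 1 - 1 - (i : ℕ))) := by ring
      rw [e2, e3]
      ring
    calc ∏ i : Fin (k+1),
        ((RatFunc.X : RatFunc ℚ) ^ (d * (q ^ (k+1) - q ^ (k + 1 - 1 - (i : ℕ)))))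
            ^ (deltaStat q (fun j => (f j : ℕ)) i)
          * qint (q ^ (f i : ℕ)) (RatFunc.X ^ (d * (q ^ (k+1) - q ^ (k + 1 - 1 - (i : ℕ)))))
        = ∏ i : Fin (k+1),
          (((RatFunc.X : RatFunc ℚ) ^ (d * (q ^ (k+1) - q ^ (k + 1 - 1 - (i : ℕ)))))
              ^ (if (i:ℕ) = k + 1 - 1 then 1 else 0)
            * ((1 - (RatFunc.X : RatFunc ℚ)^(d*q*(q^(k+1)-q^(k+1-1-(i:ℕ)))))
              / (1 - RatFunc.X^(d*(q^(k+1)-q^(k+1-1-(i:ℕ)))))))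
          * (((RatFunc.X : RatFunc ℚ) ^ (d * q * (q ^ (k+1) - q ^ (k + 1 - 1 - (i : ℕ)))))
              ^ (deltaStat q (fun j => (f j : ℕ) - 1) i)
            * qint (q ^ ((f i : ℕ) - 1)) (RatFunc.X ^ (d * q * (q ^ (k+1) - q ^ (k + 1 - 1 - (i : ℕ)))))) :=
          Finset.prod_congr rfl (fun i _ => step i)
      _ = ((∏ i : Fin (k+1), ((RatFunc.X : RatFunc ℚ) ^ (d * (q ^ (k+1) - q ^ (k + 1 - 1 - (i : ℕ)))))
              ^ (if (i:ℕ) = k + 1 - 1 then 1 else 0))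
            * ∏ i : Fin (k+1), ((1 - (RatFunc.X : RatFunc ℚ)^(d*q*(q^(k+1)-q^(k+1-1-(i:ℕ)))))
              / (1 - RatFunc.X^(d*(q^(k+1)-q^(k+1-1-(i:ℕ)))))))
          * ∏ i : Fin (k+1), (((RatFunc.X : RatFunc ℚ) ^ (d * q * (q ^ (k+1) - q ^ (k + 1 - 1 - (i : ℕ)))))
              ^ (deltaStat q (fun j => (f j : ℕ) - 1) i)
            * qint (q ^ ((f i : ℕ) - 1)) (RatFunc.X ^ (d * q * (q ^ (k+1) - q ^ (k + 1 - 1 - (i : ℕ)))))) := by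
          rw [Finset.prod_mul_distrib, Finset.prod_mul_distrib]
      _ = (RatFunc.X ^ (d*(q^(k+1)-1)) *
            ∏ i : Fin (k+1), ((1 - (RatFunc.X : RatFunc ℚ)^(d*q*(q^(k+1)-q^(k+1-1-(i:ℕ)))))
              / (1 - RatFunc.X^(d*(q^(k+1)-q^(k+1-1-(i:ℕ)))))))
          * ∏ i : Fin (k+1), (((RatFunc.X : RatFunc ℚ) ^ (d * q * (q ^ (k+1) - q ^ (k + 1 - 1 - (i : ℕ)))))
              ^ (deltaStat q (fun j => (f j : ℕ) - 1) i)
            * qint (q ^ ((f i : ℕ) - 1)) (RatFunc.X ^ (d * q * (q ^ (k+1) - q ^ (k + 1 - 1 - (i : ℕ)))))) := by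
          congr 2
          rw [Finset.prod_eq_single_of_mem (Fin.last k) (Finset.mem_univ _)]
          · rw [if_pos (by simp), pow_one]
            have h0 : k + 1 - 1 - ((Fin.last k):ℕ) = 0 := by simp
            rw [h0, pow_zero]
          · intro b _ hb
            rw [if_neg, pow_zero]
            intro hbv
            exact hb (Fin.ext (by simpa using hbv))

lemma core {F : Type*} [Field F] (N1 D1 L0 LL' M0 Mk1 Z : F)
    (hD1 : D1 ≠ 0) (hL0 : L0 ≠ 0) (hLL' : LL' ≠ 0)
    (key : L0 + Z * Mk1 = M0) :
    N1/D1 + Z * (LL'/(D1*L0)) * ((N1*Mk1)/LL') = (M0*N1)/(D1*L0) := by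
  field_simp
  linear_combination N1 * key

lemma pascal (q d k c : ℕ) (hq : 2 ≤ q) (hd : 1 ≤ d) :
    (∏ i ∈ range k, (1 - (RatFunc.X : RatFunc ℚ) ^ (d*q*(q^(c+1+k) - q^i))) /
        (1 - RatFunc.X ^ (d*q*(q^k - q^i))))
      + (RatFunc.X ^ (d*(q^(k+1)-1)) *
        ∏ i ∈ range (k+1), (1 - (RatFunc.X : RatFunc ℚ) ^ (d*q*(q^(k+1) - q^i))) /
            (1 - RatFunc.X ^ (d*(q^(k+1) - q^i)))) *
        (∏ i ∈ range (k+1), (1 - (RatFunc.X : RatFunc ℚ) ^ (d*q*(q^(c+(k+1)) - q^i))) /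
            (1 - RatFunc.X ^ (d*q*(q^(k+1) - q^i))))
    = ∏ i ∈ range (k+1), (1 - (RatFunc.X : RatFunc ℚ) ^ (d*(q^(c+1+(k+1)) - q^i))) /
        (1 - RatFunc.X ^ (d*(q^(k+1) - q^i))) := by
  have hdq : ∀ a b : ℕ, d*q*(q^a - q^b) = d*(q^(a+1) - q^(b+1)) := fun a b => by
    rw [mul_assoc, Nat.mul_sub, ← pow_succ', ← pow_succ']
  simp only [hdq]
  simp only [show c+1+k+1 = c+k+2 from by omega, show c+(k+1)+1 = c+k+2 from by omega,
    show k+1+1 = k+2 from by omega, show c+1+(k+1) = c+k+2 from by omega]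
  set M : ℕ → RatFunc ℚ := fun i => 1 - RatFunc.X ^ (d*(q^(c+k+2) - q^i)) with hMdef
  set L : ℕ → RatFunc ℚ := fun i => 1 - RatFunc.X ^ (d*(q^(k+1) - q^i)) with hLdef
  set L' : ℕ → RatFunc ℚ := fun i => 1 - RatFunc.X ^ (d*(q^(k+2) - q^i)) with hL'def
  rw [prod_div_distrib, prod_div_distrib, prod_div_distrib, prod_div_distrib]
  rw [prod_range_succ' L k, prod_range_succ' M k, prod_range_succ (fun i => M (i+1)) k]
  have hD1 : (∏ i ∈ range k, L (i+1)) ≠ 0 := by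
    apply prod_ne_zero_iff.2
    intro i hi
    exact one_sub_X_pow_ne_zero _ (epos q d hq hd (by simp at hi; omega))
  have hL0 : L 0 ≠ 0 := one_sub_X_pow_ne_zero _ (epos q d hq hd (by positivity))
  have hLL' : (∏ i ∈ range (k+1), L' (i+1)) ≠ 0 := by
    apply prod_ne_zero_iff.2
    intro i hi
    exact one_sub_X_pow_ne_zero _ (epos q d hq hd (by simp at hi; omega))
  have key : L 0 + RatFunc.X ^ (d*(q^(k+1)-1)) * M (k+1) = M 0 := by
    simp only [hLdef, hMdef, pow_zero]
    have h1 : q^(k+1) ≤ q^(c+k+2) := Nat.pow_le_pow_right (by omega) (by omega)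
    have h0 : (1:ℕ) ≤ q^(k+1) := Nat.one_le_pow _ _ (by omega)
    have : d*(q^(k+1)-1) + d*(q^(c+k+2) - q^(k+1)) = d*(q^(c+k+2) - 1) := by
      rw [← Nat.mul_add]; congr 1; omega
    rw [mul_sub, mul_one, ← pow_add, this]
    ring
  calc (∏ i ∈ range k, M (i+1)) / (∏ i ∈ range k, L (i+1))
      + RatFunc.X ^ (d*(q^(k+1)-1)) *
        ((∏ i ∈ range (k+1), L' (i+1)) / ((∏ i ∈ range k, L (i+1)) * L 0)) *
        (((∏ i ∈ range k, M (i+1)) * M (k+1)) / (∏ i ∈ range (k+1), L' (i+1)))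
      = (M 0 * (∏ i ∈ range k, M (i+1))) / ((∏ i ∈ range k, L (i+1)) * L 0) :=
        core _ _ _ _ _ _ _ hD1 hL0 hLL' key
    _ = ((∏ i ∈ range k, M (i+1)) * M 0) / ((∏ i ∈ range k, L (i+1)) * L 0) := by
        rw [mul_comm (M 0)]

lemma main_sum (q : ℕ) (hq : 2 ≤ q) :
    ∀ k c d : ℕ, 1 ≤ d →
    (∑ f ∈ Finset.univ.filter
        (fun f : Fin k → Fin (c+1) => ∀ i j : Fin k, i ≤ j → f j ≤ f i), smd q d f)
      = ∏ i ∈ Finset.range k,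
          (1 - (RatFunc.X : RatFunc ℚ) ^ (d*(q ^ (c+k) - q ^ i))) /
            (1 - RatFunc.X ^ (d*(q ^ k - q ^ i))) := by
  intro k
  induction k with
  | zero =>
    intro c d _
    rw [Finset.filter_true_of_mem (fun f _ => fun i => i.elim0)]
    simp [smd]
  | succ k ihk =>
    intro c
    induction c with
    | zero =>
      intro d hd
      have hone : ∀ f : Fin (k+1) → Fin 1, f ∈ Finset.univ.filter
          (fun f : Fin (k+1) → Fin 1 => ∀ i j : Fin (k+1), i ≤ j → f j ≤ f i) →
          smd q d f = 1 := by
        intro f _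
        unfold smd
        apply Finset.prod_eq_one
        intro i _
        have hv : (f i : ℕ) = 0 := Nat.lt_one_iff.mp (f i).isLt
        have hδ : deltaStat q (fun j => (f j : ℕ)) i = 0 := by
          unfold deltaStat
          simp [hv]
        rw [hδ, pow_zero, one_mul, hv, pow_zero]
        apply qint_one
        apply one_sub_X_pow_ne_zero
        exact epos q d hq hd (by have := i.isLt; omega)
      rw [Finset.sum_congr rfl hone]
      rw [Finset.filter_true_of_mem (fun f _ => fun i j _ => le_of_eq (Subsingleton.elim _ _))]
      rw [Finset.sum_const]
      have hcard : (Finset.univ : Finset (Fin (k+1) → Fin 1)).card = 1 := by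
        simp [Finset.card_univ]
      rw [hcard, one_smul]
      symm
      apply Finset.prod_eq_one
      intro i hi
      rw [Nat.zero_add]
      apply div_self
      apply one_sub_X_pow_ne_zero
      exact epos q d hq hd (by simp at hi; omega)
    | succ c ihc =>
      intro d hd
      have hdq : 1 ≤ d * q := Nat.mul_pos hd (by omega)
      rw [← Finset.sum_filter_add_sum_filter_not (Finset.univ.filter
          (fun f : Fin (k+1) → Fin (c+2) => ∀ i j : Fin (k+1), i ≤ j → f j ≤ f i))
          (fun f => f (Fin.last k) = 0) (smd q d)]
      rw [sum0 q d k c hq hd, sum1 q d k c hq hd]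
      rw [ihk (c+1) (d*q) hdq, ihc (d*q) hdq]
      have hR : (∏ i : Fin (k+1), (1 - (RatFunc.X : RatFunc ℚ)^(d*q*(q^(k+1)-q^(k+1-1-(i:ℕ)))))
            / (1 - RatFunc.X^(d*(q^(k+1)-q^(k+1-1-(i:ℕ))))))
          = ∏ i ∈ Finset.range (k+1), (1 - (RatFunc.X : RatFunc ℚ)^(d*q*(q^(k+1)-q^i)))
            / (1 - RatFunc.X^(d*(q^(k+1)-q^i))) := by
        rw [Fin.prod_univ_eq_prod_range
          (fun i => (1 - (RatFunc.X : RatFunc ℚ)^(d*q*(q^(k+1)-q^(k+1-1-i))))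
            / (1 - RatFunc.X^(d*(q^(k+1)-q^(k+1-1-i))))) (k+1)]
        exact Finset.prod_range_reflect
          (fun i => (1 - (RatFunc.X : RatFunc ℚ)^(d*q*(q^(k+1)-q^i)))
            / (1 - RatFunc.X^(d*(q^(k+1)-q^i)))) (k+1)
      rw [hR]
      exact pascal q d k c hq hd

/-- For integers `q ≥ 2` and `0 ≤ k ≤ n`,
`[n choose k]_{q,t} = Σ_λ ∏_{i=1}^{k} (t^{q^k - q^{k-i}})^{δ_i(λ)} · [q^{λ_i}]_{t^{q^k - q^{k-i}}}`,
where λ ranges over partitions `(λ_1 ≥ … ≥ λ_k ≥ 0)` with `λ_1 ≤ n-k`. -/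
theorem qtbinom_partition_sum (q n k : ℕ) (hq : 2 ≤ q) (hk : k ≤ n) :
    (∏ i ∈ Finset.range k,
        (1 - (RatFunc.X : RatFunc ℚ) ^ (q ^ n - q ^ i)) / (1 - RatFunc.X ^ (q ^ k - q ^ i)))
      = ∑ f ∈ Finset.univ.filter
          (fun f : Fin k → Fin (n - k + 1) => ∀ i j : Fin k, i ≤ j → f j ≤ f i),
          ∏ i : Fin k,
            ((RatFunc.X : RatFunc ℚ) ^ (q ^ k - q ^ (k - 1 - (i : ℕ))))
                ^ (deltaStat q (fun j => (f j : ℕ)) i)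
              * qint (q ^ (f i : ℕ)) (RatFunc.X ^ (q ^ k - q ^ (k - 1 - (i : ℕ)))) := by
  have h := main_sum q hq k (n-k) 1 le_rfl
  simp only [smd, one_mul, Nat.sub_add_cancel hk] at h
  exact h.symm

end
end

section
/- In the twisted algebra where (f(t)·y^k)·(g(t)·y^ℓ) := f(t)·g(t^{q^k})·y^{k+ℓ}, the divided powers y^{(n)} := y^n / n!_{q,t} multiply according to y^{(k)} · y^{(ℓ)} = [k+ℓ choose k]_{q,t} · y^{(k+ℓ)}. -/
noncomputable section

/-- The (q,t)-binomial `[n choose k]_{q,t} = n!_{q,t}/(k!_{q,t} · (n-k)!_{q,t^{q^k}})`. -/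
def qtbin (q n k : ℕ) (t : RatFunc ℚ) : RatFunc ℚ :=
  qtfact q n t / (qtfact q k t * qtfact q (n - k) (t ^ q ^ k))

/-- The twisted multiplication `(f(t)·y^k)·(g(t)·y^ℓ) := f(t)·g(t^{q^k})·y^{k+ℓ}` on
monomials, represented as pairs of a coefficient (a function of `t`, so that the Frobenius
`t ↦ t^{q^k}` acts by substitution in the argument) and an exponent of `y`. -/
def twMul (q : ℕ) (a b : (RatFunc ℚ → RatFunc ℚ) × ℕ) : (RatFunc ℚ → RatFunc ℚ) × ℕ :=
  (fun t => a.1 t * b.1 (t ^ q ^ a.2), a.2 + b.2)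


lemma one_sub_X_pow_ne (m : ℕ) (hm : 0 < m) : (1 - RatFunc.X ^ m : RatFunc ℚ) ≠ 0 := by
  rw [sub_ne_zero]
  intro h
  have hX : (RatFunc.X : RatFunc ℚ) = algebraMap (Polynomial ℚ) _ Polynomial.X :=
    (RatFunc.algebraMap_X).symm
  rw [hX, ← map_pow, ← map_one (algebraMap (Polynomial ℚ) (RatFunc ℚ))] at h
  have := RatFunc.algebraMap_injective (K := ℚ) h
  have : (Polynomial.X ^ m : Polynomial ℚ).natDegree = (1 : Polynomial ℚ).natDegree := by
    rw [← this]
  simp [Polynomial.natDegree_X_pow] at this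
  omega

lemma qtfact_ne_s13 (q n : ℕ) (hq : 2 ≤ q) : qtfact q n RatFunc.X ≠ 0 := by
  unfold qtfact
  apply Finset.prod_ne_zero_iff.2
  intro i hi
  apply one_sub_X_pow_ne
  have : q ^ i < q ^ n :=
    Nat.pow_lt_pow_right (by omega) (Finset.mem_range.1 hi)
  omega

/-- In the twisted algebra, the divided powers `y^{(n)} := y^n / n!_{q,t}` multiply according
to `y^{(k)} · y^{(ℓ)} = [k+ℓ choose k]_{q,t} · y^{(k+ℓ)}`. -/
theorem divided_power_twisted_multiplication (q k l : ℕ) (hq : 2 ≤ q) :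
    (twMul q (fun t => (qtfact q k t)⁻¹, k) (fun t => (qtfact q l t)⁻¹, l)).2 = k + l ∧
    (twMul q (fun t => (qtfact q k t)⁻¹, k) (fun t => (qtfact q l t)⁻¹, l)).1 RatFunc.X
      = qtbin q (k + l) k RatFunc.X * (qtfact q (k + l) RatFunc.X)⁻¹ := by
  refine ⟨rfl, ?_⟩
  have hF := qtfact_ne_s13 q (k + l) hq
  show (qtfact q k RatFunc.X)⁻¹ * (qtfact q l (RatFunc.X ^ q ^ k))⁻¹ = _
  unfold qtbin
  rw [Nat.add_sub_cancel_left, div_mul_eq_mul_div, mul_inv_cancel₀ hF, one_div, mul_inv,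
    mul_comm]
end
end
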